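/- Let α ∈ (0,1]. For all nonzero complex numbers z₁ and z₂, Re( (z₁/|z₁|^α − z₂/|z₂|^α) · conj(z₁ − z₂) ) ≥ 0. -/

import Mathlib

lemma key_sign (α s t : ℝ) (hα : 0 ≤ α) (hα1 : α ≤ 1) (hs : 0 < s) (ht : 0 < t) :
    0 ≤ (s - t) * (s * t ^ α - t * s ^ α) := by
  have h1 : s ^ α * s ^ (1 - α) = s := by
    rw [← Real.rpow_add hs]; norm_num
  have h2 : t ^ α * t ^ (1 - α) = t := by
    rw [← Real.rpow_add ht]; norm_num
  have hst : s * t ^ α - t * s ^ α = s ^ α * t ^ α * (s ^ (1 - α) - t ^ (1 - α)) := by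
    calc s * t ^ α - t * s ^ α
        = (s ^ α * s ^ (1 - α)) * t ^ α - (t ^ α * t ^ (1 - α)) * s ^ α := by rw [h1, h2]
      _ = s ^ α * t ^ α * (s ^ (1 - α) - t ^ (1 - α)) := by ring
  rw [hst]
  have hAB : 0 < s ^ α * t ^ α := mul_pos (Real.rpow_pos_of_pos hs α) (Real.rpow_pos_of_pos ht α)
  rcases le_total s t with h | h
  · have hmono : s ^ (1 - α) ≤ t ^ (1 - α) := Real.rpow_le_rpow hs.le h (by linarith)
    have h3 : 0 ≤ (-(s - t)) * (-(s ^ (1 - α) - t ^ (1 - α))) :=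
      mul_nonneg (by linarith) (by linarith)
    nlinarith [h3, hAB]
  · have hmono : t ^ (1 - α) ≤ s ^ (1 - α) := Real.rpow_le_rpow ht.le h (by linarith)
    have h3 : 0 ≤ (s - t) * (s ^ (1 - α) - t ^ (1 - α)) :=
      mul_nonneg (by linarith) (by linarith)
    nlinarith [h3, hAB]

/-- Let α ∈ (0,1]. For all nonzero complex numbers z₁ and z₂,
Re( (z₁/|z₁|^α − z₂/|z₂|^α) · conj(z₁ − z₂) ) ≥ 0. -/
theorem stmt_0 (α : ℝ) (hα : 0 < α) (hα1 : α ≤ 1) (z₁ z₂ : ℂ) (hz₁ : z₁ ≠ 0) (hz₂ : z₂ ≠ 0) :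
    0 ≤ ((z₁ / ((‖z₁‖ ^ α : ℝ) : ℂ) - z₂ / ((‖z₂‖ ^ α : ℝ) : ℂ)) *
      (starRingEnd ℂ) (z₁ - z₂)).re := by
  set s := ‖z₁‖ with hsdef
  set t := ‖z₂‖ with htdef
  have hs : 0 < s := norm_pos_iff.mpr hz₁
  have ht : 0 < t := norm_pos_iff.mpr hz₂
  have hA : 0 < s ^ α := Real.rpow_pos_of_pos hs α
  have hB : 0 < t ^ α := Real.rpow_pos_of_pos ht α
  have hs2 : z₁.re ^ 2 + z₁.im ^ 2 = s ^ 2 := by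
    rw [hsdef, Complex.sq_norm, Complex.normSq_apply]; ring
  have ht2 : z₂.re ^ 2 + z₂.im ^ 2 = t ^ 2 := by
    rw [htdef, Complex.sq_norm, Complex.normSq_apply]; ring
  have hcs : z₁.re * z₂.re + z₁.im * z₂.im ≤ s * t := by
    have := Complex.abs_re_le_norm (z₁ * (starRingEnd ℂ) z₂)
    rw [norm_mul, Complex.norm_conj] at this
    have h2 : (z₁ * (starRingEnd ℂ) z₂).re = z₁.re * z₂.re + z₁.im * z₂.im := by
      simp [Complex.mul_re]
    rw [h2] at this
    calc z₁.re * z₂.re + z₁.im * z₂.im ≤ |z₁.re * z₂.re + z₁.im * z₂.im| := le_abs_self _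
      _ ≤ s * t := this
  simp only [Complex.mul_re, Complex.sub_re, Complex.sub_im, Complex.div_ofReal_re,
    Complex.div_ofReal_im, Complex.conj_re, Complex.conj_im]
  have hkey := key_sign α s t hα.le hα1 hs ht
  have expand : (z₁.re / s ^ α - z₂.re / t ^ α) * (z₁.re - z₂.re) -
      (z₁.im / s ^ α - z₂.im / t ^ α) * -(z₁.im - z₂.im) =
      ((z₁.re ^ 2 + z₁.im ^ 2) * t ^ α + (z₂.re ^ 2 + z₂.im ^ 2) * s ^ α -
        (z₁.re * z₂.re + z₁.im * z₂.im) * (s ^ α + t ^ α)) / (s ^ α * t ^ α) := by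
    field_simp
    ring
  rw [expand, hs2, ht2]
  apply div_nonneg _ (by positivity)
  nlinarith [hkey, mul_le_mul_of_nonneg_left hcs (show (0:ℝ) ≤ s ^ α + t ^ α by positivity)]
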